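/- Let J be an m×n matrix of rank r over a field Q. Call an r-tuple of row indices i nonsingular if some r×r minor Δ(i, j') is nonzero, and an r-tuple of column indices j nonsingular if some minor Δ(i', j) is nonzero. Then Δ(i, j) ≠ 0 if and only if both i is nonsingular and j is nonsingular. -/

import Mathlib

open Matrix

/-- det ≠ 0 iff columns are linearly independent, over a field. -/
private lemma det_ne_zero_iff_cols {K : Type*} [Field K] {s : ℕ}
    (A : Matrix (Fin s) (Fin s) K) :
    A.det ≠ 0 ↔ LinearIndependent K (fun k ↦ Aᵀ k) := by
  rw [show (fun k ↦ Aᵀ k) = A.col from rfl, Matrix.linearIndependent_cols_iff_isUnit, Matrix.isUnit_iff_isUnit_det,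
    isUnit_iff_ne_zero]

private lemma det_ne_zero_iff_rows {K : Type*} [Field K] {s : ℕ}
    (A : Matrix (Fin s) (Fin s) K) :
    A.det ≠ 0 ↔ LinearIndependent K (fun k ↦ A k) := by
  rw [show (fun k ↦ A k) = A.row from rfl, Matrix.linearIndependent_rows_iff_isUnit, Matrix.isUnit_iff_isUnit_det,
    isUnit_iff_ne_zero]

/-- For an `m×n` matrix `J` of rank `r` over a field: a minor `Δ(i,j) ≠ 0` iff the row
tuple `i` is nonsingular (some `Δ(i,j') ≠ 0`) and the column tuple `j` is nonsingular
(some `Δ(i',j) ≠ 0`). -/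
theorem stmt_8 {Q : Type*} [Field Q] {m n r : ℕ}
    (J : Matrix (Fin m) (Fin n) Q) (hrank : J.rank = r)
    (i : Fin r → Fin m) (j : Fin r → Fin n)
    (hi : StrictMono i) (hj : StrictMono j) :
    (J.submatrix i j).det ≠ 0 ↔
      (∃ j' : Fin r → Fin n, StrictMono j' ∧ (J.submatrix i j').det ≠ 0) ∧
      (∃ i' : Fin r → Fin m, StrictMono i' ∧ (J.submatrix i' j).det ≠ 0) := by
  constructor
  · intro h
    exact ⟨⟨j, hj, h⟩, ⟨i, hi, h⟩⟩
  · rintro ⟨⟨j', _, h1⟩, ⟨i', _, h2⟩⟩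
    -- rows `J (i k)` are linearly independent
    have hrows : LinearIndependent Q (fun k ↦ J (i k)) := by
      rw [det_ne_zero_iff_rows] at h1
      exact LinearIndependent.of_comp (LinearMap.funLeft Q Q j') h1
    -- columns `Jᵀ (j k)` are linearly independent
    have hcols : LinearIndependent Q (fun k ↦ Jᵀ (j k)) := by
      rw [det_ne_zero_iff_cols] at h2
      refine LinearIndependent.of_comp (LinearMap.funLeft Q Q i') ?_
      convert h2 using 1
      rfl
    -- rows `J (i k)` span the row space
    have hspan : Submodule.span Q (Set.range fun a ↦ J a) ≤
        Submodule.span Q (Set.range fun k ↦ J (i k)) := by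
      have hW : Module.finrank Q (Submodule.span Q (Set.range fun a ↦ J a)) = r := by
        have := Matrix.rank_eq_finrank_span_row J
        rw [hrank] at this
        exact this.symm
      have hS : Module.finrank Q (Submodule.span Q (Set.range fun k ↦ J (i k))) = r := by
        rw [finrank_span_eq_card hrows, Fintype.card_fin]
      have hle : Submodule.span Q (Set.range fun k ↦ J (i k)) ≤
          Submodule.span Q (Set.range fun a ↦ J a) := by
        apply Submodule.span_mono
        rintro _ ⟨k, rfl⟩
        exact ⟨i k, rfl⟩
      exact (Submodule.eq_of_le_of_finrank_le hle (by rw [hW, hS])).ge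
    -- main argument: columns of `J.submatrix i j` are linearly independent
    rw [det_ne_zero_iff_cols]
    rw [Fintype.linearIndependent_iff]
    intro c hc
    -- the linear functional `u ↦ ∑ k, c k * u (j k)`
    set φ : (Fin n → Q) →ₗ[Q] Q := ∑ k, c k • LinearMap.proj (j k) with hφdef
    have hφ : ∀ u : Fin n → Q, φ u = ∑ k, c k * u (j k) := by
      intro u
      simp [hφdef, LinearMap.sum_apply]
    -- φ vanishes on the rows `J (i l)`
    have hφi : ∀ l, φ (J (i l)) = 0 := by
      intro l
      rw [hφ]
      have := congrFun hc l
      simpa [Matrix.transpose_apply, Matrix.submatrix_apply, Finset.sum_apply] using this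
    -- hence φ vanishes on all rows of J
    have hφall : ∀ a, φ (J a) = 0 := by
      intro a
      have hmem : J a ∈ Submodule.span Q (Set.range fun k ↦ J (i k)) :=
        hspan (Submodule.subset_span ⟨a, rfl⟩)
      have hker : Submodule.span Q (Set.range fun k ↦ J (i k)) ≤ LinearMap.ker φ := by
        rw [Submodule.span_le]
        rintro _ ⟨k, rfl⟩
        exact hφi k
      exact hker hmem
    -- so ∑ k, c k • (column j k of J) = 0
    have hcolsum : ∑ k, c k • Jᵀ (j k) = 0 := by
      funext a
      have := hφall a
      rw [hφ] at this
      simpa [Finset.sum_apply, mul_comm] using this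
    -- conclude c = 0 by independence of the columns
    exact Fintype.linearIndependent_iff.mp hcols c hcolsum
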